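/- Let F be a finite field of characteristic 2 with q = |F|, let Tr : F → F_2 be the absolute trace map, and let γ ∈ F satisfy Tr(γ) = 1. Let W14 be the pencil of conics spanned by X1^2 + X0·X2 + γ·X2^2 and γ·X0^2 + X0·X1 + X1^2. Then exactly one of the q+1 members of W14 is singular, namely the one spanned by γ·X0^2 + X0·X1 + X1^2, and this singular member is an imaginary line pair (it has no nonzero linear form over F as a factor); the other q members are nonsingular; and W14 has no base points. In particular, there exists a pencil of conics in PG(2,q), q even, containing exactly one pair of conjugate imaginary lines and q nonsingular conics. -/

import Mathlib

noncomputable section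

open MvPolynomial

namespace Pencils

/-- The space of ternary polynomials over `F`. -/
abbrev Poly (F : Type*) [Field F] : Type _ := MvPolynomial (Fin 3) F

variable {F : Type*} [Field F]

/-- The coefficient of the monomial `X i * X j` in `f` (for `i = j`, of `X i ^ 2`). -/
def qc (f : Poly F) (i j : Fin 3) : F :=
  MvPolynomial.coeff (Finsupp.single i 1 + Finsupp.single j 1) f

/-- A quadratic form over a field of characteristic 2 is singular iff
`a00·a12² + a11·a02² + a22·a01² + a01·a02·a12 = 0`. -/
def IsSingular (f : Poly F) : Prop :=
  qc f 0 0 * qc f 1 2 ^ 2 + qc f 1 1 * qc f 0 2 ^ 2 + qc f 2 2 * qc f 0 1 ^ 2 +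
    qc f 0 1 * qc f 0 2 * qc f 1 2 = 0

/-- A pencil of conics: a 2-dimensional subspace of the space of
homogeneous quadratic forms in `X 0, X 1, X 2`. -/
def IsPencil (W : Submodule F (Poly F)) : Prop :=
  W ≤ homogeneousSubmodule (Fin 3) F 2 ∧ Module.finrank F ↥W = 2

/-- A member of a pencil `W` is a 1-dimensional subspace of `W`. -/
def IsMember (W L : Submodule F (Poly F)) : Prop :=
  L ≤ W ∧ Module.finrank F ↥L = 1

/-- A double line: all nonzero elements are squares of nonzero linear forms. -/
def IsDoubleLine (L : Submodule F (Poly F)) : Prop :=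
  ∀ f ∈ L, f ≠ 0 → ∃ ℓ : Poly F, ℓ.IsHomogeneous 1 ∧ ℓ ≠ 0 ∧ f = ℓ ^ 2

/-- A real line pair: all nonzero elements are products of two linearly
independent linear forms over `F`. -/
def IsRealPair (L : Submodule F (Poly F)) : Prop :=
  ∀ f ∈ L, f ≠ 0 → ∃ ℓ m : Poly F, ℓ.IsHomogeneous 1 ∧ m.IsHomogeneous 1 ∧
    LinearIndependent F ![ℓ, m] ∧ f = ℓ * m

/-- `f` has a nonzero linear form over `F` as a factor. -/
def HasLinearFactor (f : Poly F) : Prop :=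
  ∃ ℓ : Poly F, ℓ.IsHomogeneous 1 ∧ ℓ ≠ 0 ∧ ℓ ∣ f

/-- An imaginary line pair: all nonzero elements are singular with no linear factor over `F`. -/
def IsImagPair (L : Submodule F (Poly F)) : Prop :=
  ∀ f ∈ L, f ≠ 0 → IsSingular f ∧ ¬ HasLinearFactor f

/-- A nonsingular member: all nonzero elements are nonsingular. -/
def IsNonsingularConic (L : Submodule F (Poly F)) : Prop :=
  ∀ f ∈ L, f ≠ 0 → ¬ IsSingular f

/-- `a1 W`: number of members of `W` that are double lines. -/
def a1 (W : Submodule F (Poly F)) : ℕ :=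
  Nat.card {L : Submodule F (Poly F) // IsMember W L ∧ IsDoubleLine L}

/-- `a2r W`: number of members of `W` that are real line pairs. -/
def a2r (W : Submodule F (Poly F)) : ℕ :=
  Nat.card {L : Submodule F (Poly F) // IsMember W L ∧ IsRealPair L}

/-- `a2i W`: number of members of `W` that are imaginary line pairs. -/
def a2i (W : Submodule F (Poly F)) : ℕ :=
  Nat.card {L : Submodule F (Poly F) // IsMember W L ∧ IsImagPair L}

/-- `a3 W`: number of members of `W` that are nonsingular conics. -/
def a3 (W : Submodule F (Poly F)) : ℕ :=
  Nat.card {L : Submodule F (Poly F) // IsMember W L ∧ IsNonsingularConic L}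

/-- A base point of the pencil `W`: a 1-dimensional subspace of `F³` on which
every element of `W` vanishes. -/
def IsBasePoint (W : Submodule F (Poly F)) (P : Submodule F (Fin 3 → F)) : Prop :=
  Module.finrank F ↥P = 1 ∧ ∀ f ∈ W, ∀ v ∈ P, MvPolynomial.eval v f = 0

/-- `b W`: the number of base points of `W`. -/
def b (W : Submodule F (Poly F)) : ℕ :=
  Nat.card {P : Submodule F (Fin 3 → F) // IsBasePoint W P}

/-- The substitution action of a matrix `g` on quadratic forms: `(g • f)(X) = f(g·X)`. -/
def act (g : Matrix (Fin 3) (Fin 3) F) : Poly F →ₗ[F] Poly F :=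
  (MvPolynomial.aeval (fun i => ∑ j : Fin 3, MvPolynomial.C (g i j) * MvPolynomial.X j) :
    Poly F →ₐ[F] Poly F).toLinearMap



/-! ### Auxiliary machinery -/

section Aux

/-- generic quadratic -/
def quad (a00 a11 a22 a01 a02 a12 : F) : Poly F :=
  C a00 * X 0 ^ 2 + C a11 * X 1 ^ 2 + C a22 * X 2 ^ 2 +
  C a01 * (X 0 * X 1) + C a02 * (X 0 * X 2) + C a12 * (X 1 * X 2)

lemma XXmon (i j : Fin 3) :
    (X i * X j : Poly F) = monomial (Finsupp.single i 1 + Finsupp.single j 1) 1 := by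
  rw [show (X i : Poly F) = monomial (Finsupp.single i 1) 1 from rfl,
    show (X j : Poly F) = monomial (Finsupp.single j 1) 1 from rfl, monomial_mul, one_mul]

lemma qc_quad (a00 a11 a22 a01 a02 a12 : F) :
    qc (quad a00 a11 a22 a01 a02 a12) 0 0 = a00 ∧
    qc (quad a00 a11 a22 a01 a02 a12) 1 1 = a11 ∧
    qc (quad a00 a11 a22 a01 a02 a12) 2 2 = a22 ∧
    qc (quad a00 a11 a22 a01 a02 a12) 0 1 = a01 ∧
    qc (quad a00 a11 a22 a01 a02 a12) 0 2 = a02 ∧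
    qc (quad a00 a11 a22 a01 a02 a12) 1 2 = a12 := by
  refine ⟨?_, ?_, ?_, ?_, ?_, ?_⟩ <;>
  · simp only [qc, quad, XXmon, X_pow_eq_monomial, C_mul_monomial, coeff_add, coeff_C_mul,
      coeff_monomial, Finsupp.ext_iff, Finsupp.add_apply, Finsupp.single_apply]
    simp (config := { decide := true }) [Fin.forall_fin_succ]

lemma isSingular_quad (a00 a11 a22 a01 a02 a12 : F) :
    IsSingular (quad a00 a11 a22 a01 a02 a12) ↔
      a00 * a12 ^ 2 + a11 * a02 ^ 2 + a22 * a01 ^ 2 + a01 * a02 * a12 = 0 := by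
  obtain ⟨h1, h2, h3, h4, h5, h6⟩ := qc_quad a00 a11 a22 a01 a02 a12 (F := F)
  unfold IsSingular
  rw [h1, h2, h3, h4, h5, h6]

lemma quad_eq_zero {a00 a11 a22 a01 a02 a12 : F}
    (h : quad a00 a11 a22 a01 a02 a12 = 0) : a01 = 0 ∧ a02 = 0 := by
  obtain ⟨-, -, -, h4, h5, -⟩ := qc_quad a00 a11 a22 a01 a02 a12 (F := F)
  rw [h] at h4 h5
  simp only [qc, coeff_zero] at h4 h5
  exact ⟨h4.symm, h5.symm⟩

lemma eval_quad (a00 a11 a22 a01 a02 a12 : F) (v : Fin 3 → F) :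
    eval v (quad a00 a11 a22 a01 a02 a12) =
      a00 * v 0 ^ 2 + a11 * v 1 ^ 2 + a22 * v 2 ^ 2 +
      a01 * (v 0 * v 1) + a02 * (v 0 * v 2) + a12 * (v 1 * v 2) := by
  simp [quad]

/-- Irreducibility of `x² + xy + γy²` when `Tr γ = 1`. -/
lemma traceIrred [Fintype F] [CharP F 2] {n : ℕ} (hn : Fintype.card F = 2 ^ n) {γ : F}
    (htr : ∑ i ∈ Finset.range n, γ ^ 2 ^ i = 1) :
    ∀ x y : F, x ^ 2 + x * y + γ * y ^ 2 = 0 → x = 0 ∧ y = 0 := by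
  intro x y h
  by_cases hy : y = 0
  · subst hy
    simp only [mul_zero, add_zero, zero_pow, ne_eq, OfNat.ofNat_ne_zero, not_false_iff] at h
    have : x ^ 2 = 0 := by linear_combination h
    exact ⟨by simpa using pow_eq_zero_iff (n := 2) (by norm_num) |>.mp this, rfl⟩
  · exfalso
    set t := x * y⁻¹ with ht
    have hx : x = t * y := by
      rw [ht, mul_assoc, inv_mul_cancel₀ hy, mul_one]
    have h' : t ^ 2 + t + γ = 0 := by
      rw [hx] at h
      have h0 : y ^ 2 * (t ^ 2 + t + γ) = 0 := by linear_combination h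
      rcases mul_eq_zero.mp h0 with h1 | h1
      · exact absurd (pow_eq_zero_iff (by norm_num) |>.mp h1) hy
      · exact h1
    have h2 : (2 : F) = 0 := CharTwo.two_eq_zero
    have hγ : γ = t ^ 2 + t := by linear_combination h' - (t ^ 2 + t) * h2
    have hsum : ∀ i : ℕ, γ ^ 2 ^ i = t ^ 2 ^ (i + 1) - t ^ 2 ^ i := by
      intro i
      rw [hγ, add_pow_char_pow (p := 2), CharTwo.sub_eq_add, ← pow_mul, pow_succ, mul_comm]
    have : ∑ i ∈ Finset.range n, γ ^ 2 ^ i = t ^ 2 ^ n - t ^ 2 ^ 0 := by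
      rw [Finset.sum_congr rfl fun i _ => hsum i]
      exact Finset.sum_range_sub (fun i => t ^ 2 ^ i) n
    rw [htr, ← hn, FiniteField.pow_card, pow_zero, pow_one, sub_self] at this
    exact one_ne_zero this

/-- decomposition of homogeneous degree 1 polynomials -/
lemma homog1 (ℓ : Poly F) (h : ℓ.IsHomogeneous 1) :
    ∃ a b c : F, ℓ = C a * X 0 + C b * X 1 + C c * X 2 := by
  refine ⟨coeff (Finsupp.single 0 1) ℓ, coeff (Finsupp.single 1 1) ℓ,
    coeff (Finsupp.single 2 1) ℓ, ?_⟩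
  apply MvPolynomial.ext
  intro d
  rw [coeff_add, coeff_add, coeff_C_mul, coeff_C_mul, coeff_C_mul, coeff_X', coeff_X', coeff_X']
  by_cases h0 : Finsupp.single (0 : Fin 3) 1 = d
  · rw [← h0]
    simp [Finsupp.single_eq_single_iff]
  by_cases h1 : Finsupp.single (1 : Fin 3) 1 = d
  · rw [← h1]
    simp [Finsupp.single_eq_single_iff]
  by_cases h2 : Finsupp.single (2 : Fin 3) 1 = d
  · rw [← h2]
    simp [Finsupp.single_eq_single_iff]
  rw [if_neg h0, if_neg h1, if_neg h2]
  simp only [mul_zero, add_zero]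
  apply h.coeff_eq_zero
  intro hdeg1
  have hsup : d.degree = d 0 + d 1 + d 2 := by
    show ∑ i ∈ d.support, d i = d 0 + d 1 + d 2
    rw [Finset.sum_subset (Finset.subset_univ _) (by intro i _ hi; simpa using hi)]
    exact Fin.sum_univ_three d
  have hd : d 0 + d 1 + d 2 = 1 := by rw [← hsup, hdeg1]
  have hcases : (d 0 = 1 ∧ d 1 = 0 ∧ d 2 = 0) ∨ (d 1 = 1 ∧ d 0 = 0 ∧ d 2 = 0) ∨
      (d 2 = 1 ∧ d 0 = 0 ∧ d 1 = 0) := by omega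
  rcases hcases with ⟨ha, hb, hc⟩ | ⟨ha, hb, hc⟩ | ⟨ha, hb, hc⟩
  · exact h0 (Finsupp.ext fun j => by fin_cases j <;> simp [Finsupp.single_apply, ha, hb, hc])
  · exact h1 (Finsupp.ext fun j => by fin_cases j <;> simp [Finsupp.single_apply, ha, hb, hc])
  · exact h2 (Finsupp.ext fun j => by fin_cases j <;> simp [Finsupp.single_apply, ha, hb, hc])

lemma linmul_eq_quad (a b c d e f : F) :
    (C a * X 0 + C b * X 1 + C c * X 2) * (C d * X 0 + C e * X 1 + C f * X 2) =
    quad (a * d) (b * e) (c * f) (a * e + b * d) (a * f + c * d) (b * f + c * e) := by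
  simp only [quad, C_add, C_mul]
  ring

/-- any product of two linear forms is singular (char 2) -/
lemma prod_singular [CharP F 2] {ℓ m : Poly F} (hl : ℓ.IsHomogeneous 1)
    (hm : m.IsHomogeneous 1) : IsSingular (ℓ * m) := by
  obtain ⟨a, b, c, rfl⟩ := homog1 ℓ hl
  obtain ⟨d, e, f, rfl⟩ := homog1 m hm
  rw [linmul_eq_quad, isSingular_quad]
  have h2 : (2 : F) = 0 := CharTwo.two_eq_zero
  linear_combination (b*c^2*d^2*e + b^2*c*d^2*f + a*c^2*d*e^2 + 4*a*b*c*d*e*f + a*b^2*d*f^2 +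
    a^2*c*e^2*f + a^2*b*e*f^2) * h2

/-! ### The pencil W14 -/

/-- first generator -/
def fP (γ : F) : Poly F := X 1 ^ 2 + X 0 * X 2 + C γ * X 2 ^ 2
/-- second generator -/
def sP (γ : F) : Poly F := C γ * X 0 ^ 2 + X 0 * X 1 + X 1 ^ 2

lemma comb_eq_quad (γ α β : F) :
    C α * fP γ + C β * sP γ = quad (β * γ) (α + β) (α * γ) β α 0 := by
  simp only [fP, sP, quad, C_add, C_mul, C_0]
  ring

lemma smul_comb (γ c α β : F) :
    c • (C α * fP γ + C β * sP γ) = C (c * α) * fP γ + C (c * β) * sP γ := by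
  rw [smul_eq_C_mul, mul_add, ← mul_assoc, ← mul_assoc, ← C_mul, ← C_mul]

lemma comb_inj {γ α β α' β' : F}
    (h : C α * fP γ + C β * sP γ = C α' * fP γ + C β' * sP γ) : α = α' ∧ β = β' := by
  rw [comb_eq_quad, comb_eq_quad] at h
  have h0 : quad (β * γ - β' * γ) ((α + β) - (α' + β')) (α * γ - α' * γ) (β - β') (α - α')
      ((0 : F) - 0) = 0 := by
    have hsub : ∀ x00 x11 x22 x01 x02 x12 y00 y11 y22 y01 y02 y12 : F,
        quad (x00 - y00) (x11 - y11) (x22 - y22) (x01 - y01) (x02 - y02) (x12 - y12) =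
        quad x00 x11 x22 x01 x02 x12 - quad y00 y11 y22 y01 y02 y12 := by
      intro _ _ _ _ _ _ _ _ _ _ _ _
      simp only [quad, C_sub]
      ring
    rw [hsub, h, sub_self]
  obtain ⟨h1, h2⟩ := quad_eq_zero h0
  exact ⟨sub_eq_zero.mp h2, sub_eq_zero.mp h1⟩

lemma comb_ne_zero {γ α β : F} (h : ¬(α = 0 ∧ β = 0)) :
    C α * fP γ + C β * sP γ ≠ 0 := by
  intro h0
  rw [comb_eq_quad] at h0
  obtain ⟨hb, ha⟩ := quad_eq_zero h0
  exact h ⟨ha, hb⟩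

lemma singular_comb (γ α β : F) :
    IsSingular (C α * fP γ + C β * sP γ) ↔ α * (α ^ 2 + α * β + γ * β ^ 2) = 0 := by
  rw [comb_eq_quad, isSingular_quad]
  constructor <;> intro h <;> linear_combination h

section WithTrace

variable [Fintype F] [CharP F 2] {n : ℕ} {γ : F}

lemma irred (hn : Fintype.card F = 2 ^ n)
    (htr : ∑ i ∈ Finset.range n, γ ^ 2 ^ i = 1) {x y : F}
    (h : x ^ 2 + x * y + γ * y ^ 2 = 0) : x = 0 ∧ y = 0 := traceIrred hn htr x y h

lemma gamma_ne_zero (hn : Fintype.card F = 2 ^ n)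
    (htr : ∑ i ∈ Finset.range n, γ ^ 2 ^ i = 1) : γ ≠ 0 := by
  intro h
  have := (irred hn htr (x := 0) (y := 1) (by rw [h]; ring)).2
  exact one_ne_zero this

lemma nonsingular_comb (hn : Fintype.card F = 2 ^ n)
    (htr : ∑ i ∈ Finset.range n, γ ^ 2 ^ i = 1) {α β : F} (hα : α ≠ 0) :
    ¬ IsSingular (C α * fP γ + C β * sP γ) := by
  rw [singular_comb]
  intro h
  rcases mul_eq_zero.mp h with h1 | h1
  · exact hα h1
  · exact hα (irred hn htr h1).1

lemma singular_comb_alpha (hn : Fintype.card F = 2 ^ n)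
    (htr : ∑ i ∈ Finset.range n, γ ^ 2 ^ i = 1) {α β : F}
    (h : IsSingular (C α * fP γ + C β * sP γ)) : α = 0 := by
  by_contra hα
  exact nonsingular_comb hn htr hα h

/-- no linear form over `F` divides `sP γ` -/
lemma no_lin_dvd (hn : Fintype.card F = 2 ^ n)
    (htr : ∑ i ∈ Finset.range n, γ ^ 2 ^ i = 1) {ℓ : Poly F}
    (hl : ℓ.IsHomogeneous 1) : ¬ ℓ ∣ sP γ := by
  rintro ⟨m, hm⟩
  obtain ⟨a, b, c, rfl⟩ := homog1 ℓ hl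
  by_cases ha : a = 0
  · have h1 : eval ![1, 0, 0] (sP γ) = γ := by simp [sP]
    rw [hm, map_mul] at h1
    have h2 : eval ![1, 0, 0] (C a * X 0 + C b * X 1 + C c * X 2) = 0 := by
      simp [ha]
    rw [h2, zero_mul] at h1
    exact gamma_ne_zero hn htr h1.symm
  · set v : Fin 3 → F := ![a⁻¹ * b, 1, 0] with hv
    have h2 : eval v (C a * X 0 + C b * X 1 + C c * X 2) = 0 := by
      simp only [hv, map_add, map_mul, eval_C, eval_X, Matrix.cons_val_zero,
        Matrix.cons_val_one, Matrix.head_cons]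
      rw [← mul_assoc, mul_inv_cancel₀ ha, one_mul]
      simp [CharTwo.add_self_eq_zero]
    have h1 : eval v (sP γ) = 0 := by
      rw [hm, map_mul, h2, zero_mul]
    have h3 : eval v (sP γ) = γ * (a⁻¹ * b) ^ 2 + (a⁻¹ * b) + 1 := by
      simp [sP, hv]
    rw [h3] at h1
    have := (irred hn htr (x := 1) (y := a⁻¹ * b) (by linear_combination h1)).1
    exact one_ne_zero this

lemma singular_sP : IsSingular (sP γ) := by
  have : sP γ = C 0 * fP γ + C 1 * sP γ := by simp
  rw [this, singular_comb]
  ring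

lemma sP_ne_zero : (sP γ) ≠ 0 := by
  have : sP γ = C 0 * fP γ + C 1 * sP γ := by simp
  rw [this]
  exact comb_ne_zero (by simp)

lemma imagPair_sP (hn : Fintype.card F = 2 ^ n)
    (htr : ∑ i ∈ Finset.range n, γ ^ 2 ^ i = 1) :
    IsImagPair (Submodule.span F {sP γ}) := by
  intro g hg hg0
  obtain ⟨c, rfl⟩ := Submodule.mem_span_singleton.mp hg
  have hc : c ≠ 0 := by rintro rfl; simp at hg0
  constructor
  · have : c • sP γ = C 0 * fP γ + C c * sP γ := by
      rw [smul_eq_C_mul]; simp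
    rw [this, singular_comb]
    ring
  · rintro ⟨ℓ, hl, -, hdvd⟩
    refine no_lin_dvd hn htr hl ?_
    have : sP γ = C c⁻¹ * (c • sP γ) := by
      rw [smul_eq_C_mul, ← mul_assoc, ← C_mul, inv_mul_cancel₀ hc, C_1, one_mul]
    rw [this]
    exact Dvd.dvd.mul_left hdvd _

end WithTrace

/-- every member of the pencil is spanned by a combination -/
lemma member_structure {γ : F} {L : Submodule F (Poly F)}
    (hL : IsMember (Submodule.span F {fP γ, sP γ}) L) :
    ∃ α β : F, ¬(α = 0 ∧ β = 0) ∧ L = Submodule.span F {C α * fP γ + C β * sP γ} := by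
  obtain ⟨hle, hrank⟩ := hL
  have hbot : L ≠ ⊥ := by
    intro h
    rw [h] at hrank
    simp [finrank_bot] at hrank
  obtain ⟨v, hvL, hv0⟩ := (Submodule.ne_bot_iff L).mp hbot
  obtain ⟨α, β, hv⟩ := Submodule.mem_span_pair.mp (hle hvL)
  rw [smul_eq_C_mul, smul_eq_C_mul] at hv
  refine ⟨α, β, ?_, ?_⟩
  · rintro ⟨rfl, rfl⟩
    simp only [C_0, zero_mul, add_zero, zero_add] at hv
    exact hv0 hv.symm
  · have hle2 : Submodule.span F {v} ≤ L := by
      rw [Submodule.span_singleton_le_iff_mem]; exact hvL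
    have hfd : FiniteDimensional F L := FiniteDimensional.of_finrank_pos (by omega)
    have := Submodule.eq_of_le_of_finrank_eq hle2
      (by rw [finrank_span_singleton hv0, hrank])
    rw [← this, hv]

lemma comb_mem_span {γ α β : F} :
    C α * fP γ + C β * sP γ ∈ Submodule.span F {fP γ, sP γ} :=
  Submodule.mem_span_pair.mpr ⟨α, β, by rw [smul_eq_C_mul, smul_eq_C_mul]⟩

lemma member_comb {γ α β : F} (h : ¬(α = 0 ∧ β = 0)) :
    IsMember (Submodule.span F {fP γ, sP γ})
      (Submodule.span F {C α * fP γ + C β * sP γ}) :=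
  ⟨(Submodule.span_singleton_le_iff_mem _ _).mpr comb_mem_span,
    finrank_span_singleton (comb_ne_zero h)⟩

/-- normalization: a combination with `α ≠ 0` spans the same line as the normalized one -/
lemma span_comb_normalize {γ α β : F} (hα : α ≠ 0) :
    Submodule.span F {C α * fP γ + C β * sP γ} =
      Submodule.span F {C 1 * fP γ + C (α⁻¹ * β) * sP γ} := by
  have key : α • (C 1 * fP γ + C (α⁻¹ * β) * sP γ) = C α * fP γ + C β * sP γ := by
    rw [smul_comb, mul_one, ← mul_assoc, mul_inv_cancel₀ hα, one_mul]
  rw [← key]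
  exact Submodule.span_singleton_smul_eq (IsUnit.mk0 α hα) _

lemma span_comb_zero {γ β : F} (hβ : β ≠ 0) :
    Submodule.span F {C 0 * fP γ + C β * sP γ} = Submodule.span F {sP γ} := by
  have key : β • sP γ = C 0 * fP γ + C β * sP γ := by
    rw [smul_eq_C_mul]; simp
  rw [← key]
  exact Submodule.span_singleton_smul_eq (IsUnit.mk0 β hβ) _

/-- elements of a member line -/
lemma mem_span_comb {γ α β : F} {g : Poly F}
    (hg : g ∈ Submodule.span F {C α * fP γ + C β * sP γ}) (hg0 : g ≠ 0) :
    ∃ c : F, c ≠ 0 ∧ g = C (c * α) * fP γ + C (c * β) * sP γ := by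
  obtain ⟨c, rfl⟩ := Submodule.mem_span_singleton.mp hg
  have hc : c ≠ 0 := by rintro rfl; simp at hg0
  exact ⟨c, hc, smul_comb γ c α β⟩

end Aux

/-- for `γ` with `Tr(γ) = 1`, the pencil
`W14 = ⟨X1² + X0·X2 + γ·X2², γ·X0² + X0·X1 + X1²⟩` has exactly one singular member, namely
the one spanned by `γ·X0² + X0·X1 + X1²`, which is an imaginary line pair; the other `q`
members are nonsingular; and `W14` has no base points. -/
theorem omega14_pencil (F : Type*) [Field F] [Fintype F] [CharP F 2]
    (n : ℕ) (hn : Fintype.card F = 2 ^ n) (γ : F)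
    (htr : ∑ i ∈ Finset.range n, γ ^ 2 ^ i = 1) :
    let q := Fintype.card F
    let s : Poly F := C γ * X 0 ^ 2 + X 0 * X 1 + X 1 ^ 2
    let W14 : Submodule F (Poly F) :=
      Submodule.span F {X 1 ^ 2 + X 0 * X 2 + C γ * X 2 ^ 2, s}
    (∀ L, IsMember W14 L → (¬ IsNonsingularConic L ↔ L = Submodule.span F {s})) ∧
    IsImagPair (Submodule.span F {s}) ∧
    (a1 W14, a2r W14, a2i W14, a3 W14) = (0, 0, 1, q) ∧
    b W14 = 0 := by
  intro q s W14
  have hW : W14 = Submodule.span F {fP γ, sP γ} := rfl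
  have hs : s = sP γ := rfl
  have part1 : ∀ L, IsMember W14 L → (¬ IsNonsingularConic L ↔ L = Submodule.span F {s}) := by
    intro L hL
    rw [hW] at hL
    obtain ⟨α, β, hne, rfl⟩ := member_structure hL
    rw [hs]
    constructor
    · intro hns
      by_cases hα : α = 0
      · subst hα
        exact span_comb_zero (fun h => hne ⟨rfl, h⟩)
      · exfalso
        apply hns
        intro g hg hg0
        obtain ⟨c, hc, rfl⟩ := mem_span_comb hg hg0
        exact nonsingular_comb hn htr (mul_ne_zero hc hα)
    · intro heq
      rw [heq]
      intro hns
      exact hns (sP γ) (Submodule.mem_span_singleton_self _) sP_ne_zero singular_sP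
  have key_imag : ∀ L, IsMember W14 L → IsImagPair L → L = Submodule.span F {sP γ} := by
    intro L hm him
    rw [hW] at hm
    obtain ⟨α, β, hne, rfl⟩ := member_structure hm
    have hsing := (him _ (Submodule.mem_span_singleton_self _) (comb_ne_zero hne)).1
    have hα : α = 0 := singular_comb_alpha hn htr hsing
    subst hα
    exact span_comb_zero (fun h => hne ⟨rfl, h⟩)
  have hgen : C (0 : F) * fP γ + C (1 : F) * sP γ = sP γ := by simp
  have hmem_sP : IsMember W14 (Submodule.span F {sP γ}) := by
    rw [hW]
    have := member_comb (γ := γ) (α := 0) (β := 1) (by simp)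
    rwa [hgen] at this
  have ha1 : a1 W14 = 0 := by
    have : IsEmpty {L : Submodule F (Poly F) // IsMember W14 L ∧ IsDoubleLine L} := by
      constructor
      rintro ⟨L, hmem, hdl⟩
      rw [hW] at hmem
      obtain ⟨α, β, hne, rfl⟩ := member_structure hmem
      obtain ⟨ℓ, hl, hl0, hu⟩ := hdl _ (Submodule.mem_span_singleton_self _) (comb_ne_zero hne)
      have hsing : IsSingular (C α * fP γ + C β * sP γ) := by
        rw [hu, sq]; exact prod_singular hl hl
      have hα : α = 0 := singular_comb_alpha hn htr hsing
      subst hα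
      have hβ : β ≠ 0 := fun h => hne ⟨rfl, h⟩
      apply no_lin_dvd hn htr hl (γ := γ)
      have hcs : C β * sP γ = ℓ ^ 2 := by rw [← hu]; simp
      have hsp : sP γ = C β⁻¹ * ℓ ^ 2 := by
        rw [← hcs, ← mul_assoc, ← C_mul, inv_mul_cancel₀ hβ, C_1, one_mul]
      rw [hsp]
      exact Dvd.dvd.mul_left (dvd_pow_self ℓ two_ne_zero) _
    simp [a1, Nat.card_of_isEmpty]
  have ha2r : a2r W14 = 0 := by
    have : IsEmpty {L : Submodule F (Poly F) // IsMember W14 L ∧ IsRealPair L} := by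
      constructor
      rintro ⟨L, hmem, hrp⟩
      rw [hW] at hmem
      obtain ⟨α, β, hne, rfl⟩ := member_structure hmem
      obtain ⟨ℓ, m, hl, hm, hli, hu⟩ :=
        hrp _ (Submodule.mem_span_singleton_self _) (comb_ne_zero hne)
      have hsing : IsSingular (C α * fP γ + C β * sP γ) := by
        rw [hu]; exact prod_singular hl hm
      have hα : α = 0 := singular_comb_alpha hn htr hsing
      subst hα
      have hβ : β ≠ 0 := fun h => hne ⟨rfl, h⟩
      apply no_lin_dvd hn htr hl (γ := γ)
      have hcs : C β * sP γ = ℓ * m := by rw [← hu]; simp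
      have hsp : sP γ = C β⁻¹ * (ℓ * m) := by
        rw [← hcs, ← mul_assoc, ← C_mul, inv_mul_cancel₀ hβ, C_1, one_mul]
      rw [hsp]
      exact Dvd.dvd.mul_left (Dvd.intro m rfl) _
    simp [a2r, Nat.card_of_isEmpty]
  have ha2i : a2i W14 = 1 := by
    rw [a2i, Nat.card_eq_one_iff_unique]
    constructor
    · constructor
      rintro ⟨L1, hm1, hi1⟩ ⟨L2, hm2, hi2⟩
      exact Subtype.ext ((key_imag L1 hm1 hi1).trans (key_imag L2 hm2 hi2).symm)
    · exact ⟨⟨Submodule.span F {sP γ}, hmem_sP, imagPair_sP hn htr⟩⟩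
  have ha3 : a3 W14 = q := by
    have hbij : Function.Bijective (fun β : F =>
        (⟨Submodule.span F {C 1 * fP γ + C β * sP γ},
          by rw [hW]; exact member_comb (by simp),
          fun g hg hg0 => by
            obtain ⟨c, hc, rfl⟩ := mem_span_comb hg hg0
            exact nonsingular_comb hn htr (by simpa using hc)⟩ :
          {L : Submodule F (Poly F) // IsMember W14 L ∧ IsNonsingularConic L})) := by
      constructor
      · intro b1 b2 hb
        simp only [Subtype.mk.injEq] at hb
        have h1 : C 1 * fP γ + C b1 * sP γ ∈
            Submodule.span F {C 1 * fP γ + C b2 * sP γ} := by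
          rw [← hb]; exact Submodule.mem_span_singleton_self _
        obtain ⟨c, hc, hg⟩ := mem_span_comb h1 (comb_ne_zero (by simp))
        obtain ⟨hc1, hc2⟩ := comb_inj hg
        rw [mul_one] at hc1
        rw [← hc1, one_mul] at hc2
        exact hc2
      · rintro ⟨L, hmem, hns⟩
        rw [hW] at hmem
        obtain ⟨α, β, hne, hLeq⟩ := member_structure hmem
        have hα : α ≠ 0 := by
          rintro rfl
          have hmemL : C (0 : F) * fP γ + C β * sP γ ∈ L := by
            rw [hLeq]; exact Submodule.mem_span_singleton_self _
          exact hns _ hmemL (comb_ne_zero hne) ((singular_comb γ 0 β).mpr (by ring))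
        refine ⟨α⁻¹ * β, Subtype.ext ?_⟩
        simp only
        rw [hLeq, span_comb_normalize hα]
    rw [a3, ← Nat.card_eq_of_bijective _ hbij, Nat.card_eq_fintype_card]
  have hb0 : b W14 = 0 := by
    have : IsEmpty {P : Submodule F (Fin 3 → F) // IsBasePoint W14 P} := by
      constructor
      rintro ⟨P, hrank, hvan⟩
      have hbot : P ≠ ⊥ := by intro h; rw [h] at hrank; simp [finrank_bot] at hrank
      obtain ⟨v, hvP, hv0⟩ := (Submodule.ne_bot_iff P).mp hbot
      have hfW : fP γ ∈ W14 := by rw [hW]; exact Submodule.subset_span (by simp)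
      have hsW : sP γ ∈ W14 := by rw [hW]; exact Submodule.subset_span (by simp)
      have hf := hvan _ hfW v hvP
      have hsv := hvan _ hsW v hvP
      have hseval : eval v (sP γ) = γ * v 0 ^ 2 + v 0 * v 1 + v 1 ^ 2 := by simp [sP]
      have hfeval : eval v (fP γ) = v 1 ^ 2 + v 0 * v 2 + γ * v 2 ^ 2 := by simp [fP]
      rw [hseval] at hsv
      obtain ⟨h1, h0⟩ := irred hn htr (x := v 1) (y := v 0) (by linear_combination hsv)
      rw [hfeval, h1, h0] at hf
      have h2 : v 2 = 0 := by
        have hγ2 : γ * v 2 ^ 2 = 0 := by linear_combination hf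
        rcases mul_eq_zero.mp hγ2 with h | h
        · exact absurd h (gamma_ne_zero hn htr)
        · exact pow_eq_zero_iff (by norm_num) |>.mp h
      apply hv0
      funext j
      fin_cases j <;> simp only [Pi.zero_apply] <;> assumption
    simp [b, Nat.card_of_isEmpty]
  refine ⟨part1, ?_, ?_, hb0⟩
  · rw [hs]
    exact imagPair_sP hn htr
  · rw [ha1, ha2r, ha2i, ha3]

end Pencils
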